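/- A topological space X is normal if and only if for every closed set A and every open set V with A ⊆ V, there exists a Q*g-open set U such that A ⊆ U ⊆ cl(U) ⊆ V. -/
import Mathlib


open Set Topology

def QStarClosed {X : Type*} [TopologicalSpace X] (A : Set X) : Prop :=
  IsClosed A ∧ interior A = ∅

def QStarOpen {X : Type*} [TopologicalSpace X] (A : Set X) : Prop :=
  QStarClosed Aᶜ

def GClosed {X : Type*} [TopologicalSpace X] (A : Set X) : Prop :=
  ∀ U : Set X, IsOpen U → A ⊆ U → closure A ⊆ U

def QStarGClosed {X : Type*} [TopologicalSpace X] (A : Set X) : Prop :=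
  ∀ U : Set X, QStarOpen U → A ⊆ U → closure A ⊆ U

def QStarGOpen {X : Type*} [TopologicalSpace X] (A : Set X) : Prop :=
  QStarGClosed Aᶜ

def QStarNormal (X : Type*) [TopologicalSpace X] : Prop :=
  ∀ A B : Set X, QStarClosed A → QStarClosed B → Disjoint A B →
    ∃ U V : Set X, IsOpen U ∧ IsOpen V ∧ A ⊆ U ∧ B ⊆ V ∧ Disjoint U V

def NormalSp (X : Type*) [TopologicalSpace X] : Prop :=
  ∀ A B : Set X, IsClosed A → IsClosed B → Disjoint A B →
    ∃ U V : Set X, IsOpen U ∧ IsOpen V ∧ A ⊆ U ∧ B ⊆ V ∧ Disjoint U V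

def GNormal (X : Type*) [TopologicalSpace X] : Prop :=
  ∀ A B : Set X, GClosed A → GClosed B → Disjoint A B →
    ∃ U V : Set X, IsOpen U ∧ IsOpen V ∧ A ⊆ U ∧ B ⊆ V ∧ Disjoint U V

theorem stmt16 {X : Type*} [TopologicalSpace X] :
    NormalSp X ↔
      ∀ A V : Set X, IsClosed A → IsOpen V → A ⊆ V →
        ∃ U : Set X, QStarGOpen U ∧ A ⊆ U ∧ U ⊆ closure U ∧ closure U ⊆ V := by
  constructor
  · intro h A V hA hV hAV
    obtain ⟨U, W, hU, hW, hAU, hBW, hdisj⟩ :=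
      h A Vᶜ hA hV.isClosed_compl (disjoint_compl_right_iff_subset.mpr hAV)
    refine ⟨U, ?_, hAU, subset_closure, ?_⟩
    · intro S hS hUS
      rwa [hU.isClosed_compl.closure_eq]
    · have hUW : U ⊆ Wᶜ := fun x hx hxW => hdisj.le_bot ⟨hx, hxW⟩
      have : closure U ⊆ Wᶜ := closure_minimal hUW hW.isClosed_compl
      exact this.trans (compl_subset_comm.mp hBW)
  · intro h A B hA hB hAB
    obtain ⟨U, hUgo, hAU, -, hclU⟩ :=
      h A Bᶜ hA hB.isOpen_compl (subset_compl_iff_disjoint_right.mpr hAB)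
    have hQ : QStarOpen (Aᶜ ∪ interior A) := by
      constructor
      · simpa [compl_union] using (hA.isOpen_compl.union isOpen_interior).isClosed_compl
      · rw [eq_empty_iff_forall_notMem]
        intro x hx
        have hxA : x ∈ A ∩ (interior A)ᶜ := by
          have := interior_subset hx
          rw [compl_union, compl_compl] at this
          exact this
        have : interior ((Aᶜ ∪ interior A)ᶜ) ⊆ interior A := by
          apply interior_mono
          intro y hy
          rw [compl_union, compl_compl] at hy
          exact hy.1
        -- interior of subset of A, which is open, is contained in interior A
        have hsub : interior ((Aᶜ ∪ interior A)ᶜ) ⊆ A := by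
          intro y hy
          have := interior_subset hy
          rw [compl_union, compl_compl] at this
          exact this.1
        have : x ∈ interior A :=
          interior_maximal hsub isOpen_interior hx
        exact hxA.2 this
    have hsub : closure Uᶜ ⊆ Aᶜ ∪ interior A := by
      apply hUgo _ hQ
      exact (compl_subset_compl.mpr hAU).trans subset_union_left
    have hAG : A ⊆ interior A ∪ interior U := by
      intro x hx
      by_cases hxi : x ∈ interior A
      · exact Or.inl hxi
      · right
        by_contra hxc
        have hxc' : x ∈ closure Uᶜ := by rw [closure_compl]; exact hxc
        rcases hsub hxc' with h1 | h2
        · exact h1 hx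
        · exact hxi h2
    set G := interior A ∪ interior U with hG
    have hGopen : IsOpen G := isOpen_interior.union isOpen_interior
    have hclG : closure G ⊆ Bᶜ := by
      have h1 : G ⊆ A ∪ U := union_subset_union interior_subset interior_subset
      have h2 : closure G ⊆ closure A ∪ closure U := by
        rw [← closure_union]; exact closure_mono h1
      rw [hA.closure_eq] at h2
      refine h2.trans (union_subset ?_ hclU)
      exact subset_compl_iff_disjoint_right.mpr hAB
    refine ⟨G, (closure G)ᶜ, hGopen, isClosed_closure.isOpen_compl, hAG,
      fun x hx hxc => (hclG hxc) hx, ?_⟩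
    exact disjoint_compl_right.mono_left subset_closure
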